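/- arXiv:1110.3606 — 2 statements merged into one kernel-verified Lean document; each statement's English description precedes it below -/
import Mathlib

section
/- Let A: ℝⁿ → ℝⁿ be a C¹ monotone map (i.e., (A(x)−A(y))·(x−y) ≥ 0 for all x,y) such that the symmetric part of its Jacobian satisfies ∇ˢA(x) ≥ K·Id as quadratic forms for all |x| ≥ R, where K > 0 and R ≥ 0. Then for all x,y with |x| ≥ 2R or |y| ≥ 2R, one has (A(x)−A(y))·(x−y) ≥ (K/3)|x−y|². -/
open MeasureTheory intervalIntegral

lemma aux_fderiv_nonneg {n : ℕ} (A : EuclideanSpace ℝ (Fin n) → EuclideanSpace ℝ (Fin n))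
    (hA : ContDiff ℝ 1 A)
    (hmono : ∀ x y, 0 ≤ (inner ℝ (A x - A y) (x - y) : ℝ)) (z v : EuclideanSpace ℝ (Fin n)) :
    0 ≤ (inner ℝ (fderiv ℝ A z v) v : ℝ) := by
  have hdiff : ∀ w, DifferentiableAt ℝ A w := fun w => (hA.differentiable one_ne_zero) w
  set h : ℝ → ℝ := fun t => inner ℝ (A (z + t • v)) v with hh
  have hγ : ∀ t : ℝ, HasDerivAt (fun t : ℝ => z + t • v) v t := fun t => by
    simpa using ((hasDerivAt_id t).smul_const v).const_add z
  have hd : HasDerivAt h (inner ℝ (fderiv ℝ A z v) v) 0 := by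
    have h1 : HasDerivAt (fun t : ℝ => A (z + t • v)) (fderiv ℝ A (z + (0:ℝ) • v) v) 0 :=
      (hdiff _).hasFDerivAt.comp_hasDerivAt 0 (hγ 0)
    have h2 := h1.inner ℝ (hasDerivAt_const (0:ℝ) v)
    simpa using h2
  have hslope : ∀ t : ℝ, t ≠ 0 → 0 ≤ slope h 0 t := by
    intro t ht
    have hm := hmono (z + t • v) z
    have e : (inner ℝ (A (z + t • v) - A z) ((z + t • v) - z) : ℝ) = t * (h t - h 0) := by
      rw [add_sub_cancel_left, inner_sub_left, real_inner_smul_right, real_inner_smul_right]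
      simp only [hh, zero_smul, add_zero]
      ring
    rw [e] at hm
    rw [slope_def_field, sub_zero]
    rcases lt_or_gt_of_ne ht with h' | h'
    · have : h t - h 0 ≤ 0 := by nlinarith
      exact div_nonneg_of_nonpos this h'.le
    · have : 0 ≤ h t - h 0 := by nlinarith
      exact div_nonneg this h'.le
  have htend := hasDerivAt_iff_tendsto_slope.1 hd
  refine ge_of_tendsto htend ?_
  filter_upwards [self_mem_nhdsWithin] with t ht
  exact hslope t ht

lemma aux_one_sided {n : ℕ} (A : EuclideanSpace ℝ (Fin n) → EuclideanSpace ℝ (Fin n))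
    (hA : ContDiff ℝ 1 A) (K R : ℝ) (hK : 0 < K) (hR : 0 ≤ R)
    (hmono : ∀ x y, 0 ≤ (inner ℝ (A x - A y) (x - y) : ℝ))
    (hconv : ∀ x, R ≤ ‖x‖ → ∀ v, K * ‖v‖ ^ 2 ≤ (inner ℝ (fderiv ℝ A x v) v : ℝ))
    (x y : EuclideanSpace ℝ (Fin n)) (hx : 2 * R ≤ ‖x‖) :
    K / 3 * ‖x - y‖ ^ 2 ≤ (inner ℝ (A x - A y) (x - y) : ℝ) := by
  have hdiff : ∀ w, DifferentiableAt ℝ A w := fun w => (hA.differentiable one_ne_zero) w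
  set v : EuclideanSpace ℝ (Fin n) := x - y with hv
  by_cases hv0 : v = 0
  · rw [hv0]; simp
  set L : ℝ := ‖v‖ with hLdef
  have hL : 0 < L := norm_pos_iff.2 hv0
  set φ : ℝ → ℝ := fun t => inner ℝ (fderiv ℝ A (y + t • v) v) v with hφ
  -- continuity
  have hγc : Continuous fun t : ℝ => y + t • v := by continuity
  have hφc : Continuous φ := by
    have h2 : Continuous fun t : ℝ => fderiv ℝ A (y + t • v) :=
      (hA.continuous_fderiv one_ne_zero).comp hγc
    exact (h2.clm_apply continuous_const).inner continuous_const
  have hint : ∀ c d : ℝ, IntervalIntegrable φ volume c d := fun c d =>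
    hφc.intervalIntegrable c d
  -- FTC
  have key : (inner ℝ (A x - A y) (x - y) : ℝ) = ∫ t in (0:ℝ)..1, φ t := by
    have hder : ∀ t ∈ Set.uIcc (0:ℝ) 1,
        HasDerivAt (fun t : ℝ => (inner ℝ (A (y + t • v)) v : ℝ)) (φ t) t := by
      intro t _
      have hγ : HasDerivAt (fun t : ℝ => y + t • v) v t := by
        simpa using ((hasDerivAt_id t).smul_const v).const_add y
      have h1 : HasDerivAt (fun t : ℝ => A (y + t • v)) (fderiv ℝ A (y + t • v) v) t :=
        (hdiff _).hasFDerivAt.comp_hasDerivAt t hγ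
      simpa [hφ] using h1.inner ℝ (hasDerivAt_const t v)
    rw [integral_eq_sub_of_hasDerivAt hder (hint 0 1)]
    have hx1 : y + (1:ℝ) • v = x := by rw [hv]; simp
    have hx0 : y + (0:ℝ) • v = y := by simp
    rw [hx1, hx0, ← hv, inner_sub_left]
  -- the bad set
  set S : Set ℝ := {t : ℝ | t ∈ Set.Icc (0:ℝ) 1 ∧ ‖y + t • v‖ ≤ R} with hS
  have hgood : ∀ t ∈ Set.Icc (0:ℝ) 1, t ∉ S → K * L ^ 2 ≤ φ t := by
    intro t ht hts
    have hRlt : R ≤ ‖y + t • v‖ := by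
      by_contra hc
      exact hts ⟨ht, (not_le.1 hc).le⟩
    exact hconv _ hRlt v
  have hub : ∀ t ∈ S, t ≤ 1 - R / L := by
    rintro t ⟨⟨ht0, ht1⟩, htR⟩
    have hid : y + t • v = x - (1 - t) • v := by
      rw [hv, sub_smul, one_smul]; abel
    have h1 : ‖x‖ - ‖(1 - t) • v‖ ≤ ‖y + t • v‖ := by
      rw [hid]; exact norm_sub_norm_le _ _
    have h2 : ‖(1 - t) • v‖ = (1 - t) * L := by
      rw [norm_smul, Real.norm_eq_abs, abs_of_nonneg (by linarith)]
    have h3 : R ≤ (1 - t) * L := by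
      rw [h2] at h1; linarith
    have h4 : R / L ≤ 1 - t := by
      rw [div_le_iff₀ hL]; linarith [mul_comm (1 - t) L]
    linarith
  have hdiam : ∀ s ∈ S, ∀ t ∈ S, (s - t) * L ≤ 2 * R := by
    rintro s ⟨_, hsR⟩ t ⟨_, htR⟩
    have he : (y + s • v) - (y + t • v) = (s - t) • v := by
      rw [sub_smul]; abel
    have := norm_sub_le (y + s • v) (y + t • v)
    rw [he, norm_smul, Real.norm_eq_abs] at this
    calc (s - t) * L ≤ |s - t| * L := by
          have := le_abs_self (s - t)
          nlinarith
      _ ≤ 2 * R := by linarith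
  by_cases hSne : S.Nonempty
  · set a : ℝ := sInf S with ha
    set b : ℝ := sSup S with hb
    have hbddA : BddAbove S := ⟨1, fun t ht => ht.1.2⟩
    have hbddB : BddBelow S := ⟨0, fun t ht => ht.1.1⟩
    have ha0 : 0 ≤ a := le_csInf hSne fun t ht => ht.1.1
    have hb1 : b ≤ 1 := csSup_le hSne fun t ht => ht.1.2
    have hab : a ≤ b := csInf_le_csSup hSne hbddB hbddA
    have hba : b - a ≤ 2 / 3 := by
      rcases le_or_gt L (3 * R) with hcase | hcase
      · have hbub : b ≤ 1 - R / L := csSup_le hSne hub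
        have : 1 / 3 ≤ R / L := by
          rw [le_div_iff₀ hL]; linarith
        linarith
      · have h2 : b - 2 * R / L ≤ a := by
          refine le_csInf hSne fun t ht => ?_
          have hb' : b ≤ t + 2 * R / L := by
            refine csSup_le hSne fun s hs => ?_
            have := hdiam s hs t ht
            have : s - t ≤ 2 * R / L := by
              rw [le_div_iff₀ hL]; linarith
            linarith
          linarith
        have : 2 * R / L ≤ 2 / 3 := by
          rw [div_le_iff₀ hL]; linarith
        linarith
    have hc0 : 0 ≤ K * L ^ 2 := by positivity
    have hsplit : (∫ t in (0:ℝ)..1, φ t) =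
        (∫ t in (0:ℝ)..a, φ t) + (∫ t in a..b, φ t) + ∫ t in b..(1:ℝ), φ t := by
      rw [integral_add_adjacent_intervals (hint 0 a) (hint a b),
        integral_add_adjacent_intervals (hint 0 b) (hint b 1)]
    have hI1 : a * (K * L ^ 2) ≤ ∫ t in (0:ℝ)..a, φ t := by
      have hmle : (fun _ : ℝ => K * L ^ 2) ≤ᵐ[volume.restrict (Set.Icc (0:ℝ) a)] φ := by
        filter_upwards [ae_restrict_mem measurableSet_Icc,
          ae_restrict_of_ae ((Set.countable_singleton a).ae_notMem volume)] with t htmem htne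
        have hta : t < a := lt_of_le_of_ne htmem.2 (by simpa using htne)
        have htI : t ∈ Set.Icc (0:ℝ) 1 := ⟨htmem.1, by linarith⟩
        exact hgood t htI fun hts => absurd (csInf_le hbddB hts) (not_le.2 hta)
      have := integral_mono_ae_restrict ha0 _root_.intervalIntegrable_const (hint 0 a) hmle
      simp only [intervalIntegral.integral_const, smul_eq_mul, sub_zero] at this
      linarith [this]
    have hI3 : (1 - b) * (K * L ^ 2) ≤ ∫ t in b..(1:ℝ), φ t := by
      have hmle : (fun _ : ℝ => K * L ^ 2) ≤ᵐ[volume.restrict (Set.Icc b 1)] φ := by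
        filter_upwards [ae_restrict_mem measurableSet_Icc,
          ae_restrict_of_ae ((Set.countable_singleton b).ae_notMem volume)] with t htmem htne
        have hta : b < t := lt_of_le_of_ne htmem.1 (by simpa using fun h => htne h.symm)
        have htI : t ∈ Set.Icc (0:ℝ) 1 := ⟨by linarith, htmem.2⟩
        exact hgood t htI fun hts => absurd (le_csSup hbddA hts) (not_le.2 hta)
      have := integral_mono_ae_restrict hb1 _root_.intervalIntegrable_const (hint b 1) hmle
      simp only [intervalIntegral.integral_const, smul_eq_mul] at this
      linarith [this]
    have hI2 : (0:ℝ) ≤ ∫ t in a..b, φ t :=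
      integral_nonneg hab fun t _ => aux_fderiv_nonneg A hA hmono _ v
    rw [key, hsplit]
    have : 1 / 3 ≤ a + (1 - b) := by linarith
    nlinarith
  · have hall : ∀ t ∈ Set.Icc (0:ℝ) 1, K * L ^ 2 ≤ φ t := fun t ht =>
      hgood t ht fun h => hSne ⟨t, h⟩
    have hmono2 := integral_mono_on (by norm_num : (0:ℝ) ≤ 1)
      (_root_.intervalIntegrable_const (c := K * L ^ 2)) (hint 0 1) hall
    rw [key]
    have h1 : (∫ _ in (0:ℝ)..1, K * L ^ 2) = K * L ^ 2 := by simp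
    rw [h1] at hmono2
    nlinarith

/-- If `A : ℝⁿ → ℝⁿ` is a `C¹` monotone vector field whose Jacobian satisfies
`∇ˢA(x) ≥ K·Id` (as quadratic forms) for `|x| ≥ R`, with `K > 0`, `R ≥ 0`, then
`(A(x)−A(y))·(x−y) ≥ (K/3)|x−y|²` whenever `|x| ≥ 2R` or `|y| ≥ 2R`. -/
theorem stmt_4 {n : ℕ} (A : EuclideanSpace ℝ (Fin n) → EuclideanSpace ℝ (Fin n))
    (hA : ContDiff ℝ 1 A) (K R : ℝ) (hK : 0 < K) (hR : 0 ≤ R)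
    (hmono : ∀ x y, 0 ≤ (inner ℝ (A x - A y) (x - y) : ℝ))
    (hconv : ∀ x, R ≤ ‖x‖ → ∀ v, K * ‖v‖ ^ 2 ≤ (inner ℝ (fderiv ℝ A x v) v : ℝ)) :
    ∀ x y, (2 * R ≤ ‖x‖ ∨ 2 * R ≤ ‖y‖) →
      K / 3 * ‖x - y‖ ^ 2 ≤ (inner ℝ (A x - A y) (x - y) : ℝ) := by
  intro x y h
  rcases h with hx | hy
  · exact aux_one_sided A hA K R hK hR hmono hconv x y hx
  · have := aux_one_sided A hA K R hK hR hmono hconv y x hy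
    have hedge : (inner ℝ (A y - A x) (y - x) : ℝ) = inner ℝ (A x - A y) (x - y) := by
      rw [show A y - A x = -(A x - A y) by abel, show y - x = -(x - y) by abel, inner_neg_neg]
    rw [hedge, norm_sub_rev y x] at this
    exact this
end

section
/- Second-order expansion underlying the WJ ⇒ Poincaré implication: let f: ℝⁿ → ℝ be smooth with bounded derivatives and φ_ε(x) = |x|²/2 + εf(x). For small ε > 0, φ_ε is strictly convex, its Hessian has eigenvalues 1 + εf_i(x) (where f_i are the eigenvalues of ∇²f(x)), and Δφ_ε(x) + Δφ_ε*(∇φ_ε(x)) − 2n = ε² ‖∇²f(x)‖²_{HS} + o(ε²) as ε → 0, uniformly on compacts. -/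
open MeasureTheory Matrix Filter
open scoped Pointwise

/-- The Hessian matrix of `φ : ℝⁿ → ℝ` at `x`. -/
noncomputable def hessMat {n : ℕ} (φ : (Fin n → ℝ) → ℝ) (x : Fin n → ℝ) :
    Matrix (Fin n) (Fin n) ℝ :=
  fun i j => fderiv ℝ (fun y => fderiv ℝ φ y (Pi.single i 1)) x (Pi.single j 1)

variable {n : ℕ}

private lemma quad_hasFDerivAt (x : Fin n → ℝ) :
    HasFDerivAt (fun y : Fin n → ℝ => (∑ i, y i ^ 2) / 2)
      (∑ i, x i • ContinuousLinearMap.proj (R := ℝ) (φ := fun _ : Fin n => ℝ) i) x := by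
  have h : (fun y : Fin n → ℝ => (∑ i, y i ^ 2) / 2) = fun y => ∑ i, y i ^ 2 / 2 := by
    funext y; rw [Finset.sum_div]
  rw [h]
  refine HasFDerivAt.fun_sum fun i _ => ?_
  have hp : HasDerivAt (fun t : ℝ => t ^ 2 / 2) (x i) (x i) := by
    simpa using (hasDerivAt_pow 2 (x i)).div_const 2
  have hproj : HasFDerivAt (fun y : Fin n → ℝ => y i)
      (ContinuousLinearMap.proj (R := ℝ) (φ := fun _ : Fin n => ℝ) i) x :=
    (ContinuousLinearMap.proj (R := ℝ) (φ := fun _ : Fin n => ℝ) i).hasFDerivAt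
  exact hp.comp_hasFDerivAt x hproj

private lemma lin_hasFDerivAt (v x : Fin n → ℝ) :
    HasFDerivAt (fun z : Fin n → ℝ => ∑ i, v i * z i)
      (∑ i, v i • ContinuousLinearMap.proj (R := ℝ) (φ := fun _ : Fin n => ℝ) i) x := by
  refine HasFDerivAt.fun_sum fun i _ => ?_
  have hproj : HasFDerivAt (fun y : Fin n → ℝ => y i)
      (ContinuousLinearMap.proj (R := ℝ) (φ := fun _ : Fin n => ℝ) i) x :=
    (ContinuousLinearMap.proj (R := ℝ) (φ := fun _ : Fin n => ℝ) i).hasFDerivAt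
  exact hproj.const_mul (v i)

private lemma phi_hasFDerivAt (f : (Fin n → ℝ) → ℝ) (hf : ContDiff ℝ 3 f) (ε : ℝ)
    (z : Fin n → ℝ) :
    HasFDerivAt (fun y => (∑ i, y i ^ 2) / 2 + ε * f y)
      ((∑ i, z i • ContinuousLinearMap.proj (R := ℝ) (φ := fun _ : Fin n => ℝ) i)
        + ε • fderiv ℝ f z) z :=
  (quad_hasFDerivAt z).add
    (((hf.differentiable (by norm_num)) z).hasFDerivAt.const_mul ε)

private lemma fderiv_apply_hasFDerivAt (f : (Fin n → ℝ) → ℝ) (hf : ContDiff ℝ 3 f)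
    (v z : Fin n → ℝ) :
    HasFDerivAt (fun y => fderiv ℝ f y v) ((fderiv ℝ (fderiv ℝ f) z).flip v) z := by
  have hfd : Differentiable ℝ (fderiv ℝ f) :=
    (hf.fderiv_right (m := 2) (by norm_num)).differentiable (by norm_num)
  have h := (hfd z).hasFDerivAt.clm_apply (hasFDerivAt_const v z)
  simpa using h

private lemma phi_snd_hasFDerivAt (f : (Fin n → ℝ) → ℝ) (hf : ContDiff ℝ 3 f) (ε : ℝ)
    (v z : Fin n → ℝ) :
    HasFDerivAt (fun y => fderiv ℝ (fun w => (∑ i, w i ^ 2) / 2 + ε * f w) y v)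
      ((∑ i, v i • ContinuousLinearMap.proj (R := ℝ) (φ := fun _ : Fin n => ℝ) i)
        + ε • (fderiv ℝ (fderiv ℝ f) z).flip v) z := by
  have key : (fun y => fderiv ℝ (fun w => (∑ i, w i ^ 2) / 2 + ε * f w) y v)
      = fun y => (∑ i, v i * y i) + ε * fderiv ℝ f y v := by
    funext y
    rw [(phi_hasFDerivAt f hf ε y).fderiv]
    simp [ContinuousLinearMap.sum_apply, mul_comm]
  rw [key]
  exact (lin_hasFDerivAt v z).add ((fderiv_apply_hasFDerivAt f hf v z).const_mul ε)

private lemma hess_f_eq (f : (Fin n → ℝ) → ℝ) (hf : ContDiff ℝ 3 f) (x : Fin n → ℝ)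
    (i j : Fin n) :
    hessMat f x i j = fderiv ℝ (fderiv ℝ f) x (Pi.single j 1) (Pi.single i 1) := by
  show fderiv ℝ (fun y => fderiv ℝ f y (Pi.single i 1)) x (Pi.single j 1) = _
  rw [(fderiv_apply_hasFDerivAt f hf (Pi.single i 1) x).fderiv]
  rfl

private lemma hess_phi (f : (Fin n → ℝ) → ℝ) (hf : ContDiff ℝ 3 f) (ε : ℝ) (x : Fin n → ℝ) :
    hessMat (fun y => (∑ i, y i ^ 2) / 2 + ε * f y) x = 1 + ε • hessMat f x := by
  ext i j
  show fderiv ℝ (fun y => fderiv ℝ (fun w => (∑ k, w k ^ 2) / 2 + ε * f w) y (Pi.single i 1)) x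
      (Pi.single j 1) = _
  rw [(phi_snd_hasFDerivAt f hf ε (Pi.single i 1) x).fderiv]
  rw [Matrix.add_apply, Matrix.one_apply, Matrix.smul_apply, hess_f_eq f hf x i j]
  simp [ContinuousLinearMap.sum_apply, Pi.single_apply, smul_eq_mul]

private lemma hess_symm (f : (Fin n → ℝ) → ℝ) (hf : ContDiff ℝ 3 f) (x : Fin n → ℝ)
    (i j : Fin n) : hessMat f x i j = hessMat f x j i := by
  rw [hess_f_eq f hf x i j, hess_f_eq f hf x j i]
  exact (hf.contDiffAt.isSymmSndFDerivAt (by norm_num)).eq _ _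

private lemma snd_bound (f : (Fin n → ℝ) → ℝ) {M : ℝ}
    (hM : ∀ x, ‖iteratedFDeriv ℝ 2 f x‖ ≤ M) (x w v : Fin n → ℝ) :
    |fderiv ℝ (fderiv ℝ f) x w v| ≤ M * (‖w‖ * ‖v‖) := by
  have h0 := (iteratedFDeriv ℝ 2 f x).le_opNorm ![w, v]
  rw [iteratedFDeriv_two_apply f x ![w, v]] at h0
  simp only [Matrix.cons_val_zero, Matrix.cons_val_one, Matrix.head_cons] at h0
  calc |fderiv ℝ (fderiv ℝ f) x w v| ≤ ‖iteratedFDeriv ℝ 2 f x‖ * ∏ i, ‖![w, v] i‖ := h0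
    _ = ‖iteratedFDeriv ℝ 2 f x‖ * (‖w‖ * ‖v‖) := by
        rw [Fin.prod_univ_two]; simp
    _ ≤ M * (‖w‖ * ‖v‖) := by
        apply mul_le_mul_of_nonneg_right (hM x) (by positivity)

private lemma hess_entry_bound (f : (Fin n → ℝ) → ℝ) (hf : ContDiff ℝ 3 f) {M : ℝ}
    (hM : ∀ x, ‖iteratedFDeriv ℝ 2 f x‖ ≤ M) (x : Fin n → ℝ) (i j : Fin n) :
    |hessMat f x i j| ≤ M := by
  rw [hess_f_eq f hf x i j]
  have := snd_bound f hM x (Pi.single j 1) (Pi.single i 1)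
  have h1 : ‖(Pi.single j 1 : Fin n → ℝ)‖ = 1 := by
    rw [Pi.norm_single]; norm_num
  have h2 : ‖(Pi.single i 1 : Fin n → ℝ)‖ = 1 := by
    rw [Pi.norm_single]; norm_num
  rw [h1, h2] at this; simpa using this

set_option maxHeartbeats 1000000 in
private lemma phi_strictConvex (f : (Fin n → ℝ) → ℝ) (hf : ContDiff ℝ 3 f) {M : ℝ}
    (hM : ∀ x, ‖iteratedFDeriv ℝ 2 f x‖ ≤ M) {ε : ℝ} (hε : 0 < ε) (hεM : ε * M < 1) :
    StrictConvexOn ℝ Set.univ (fun x => (∑ i, x i ^ 2) / 2 + ε * f x) := by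
  set φ : (Fin n → ℝ) → ℝ := fun x => (∑ i, x i ^ 2) / 2 + ε * f x with hφ
  refine ⟨convex_univ, ?_⟩
  intro x _ y _ hxy a b ha hb hab
  set v : Fin n → ℝ := y - x with hv
  have hv0 : v ≠ 0 := sub_ne_zero.mpr (Ne.symm hxy)
  set ψ : ℝ → ℝ := fun t => φ (x + t • v) with hψ
  -- first derivative of ψ
  have hL : ∀ t : ℝ, HasDerivAt (fun s : ℝ => x + s • v) v t := by
    intro t
    simpa using ((hasDerivAt_id t).smul_const v).const_add x
  have hψ' : ∀ t : ℝ, HasDerivAt ψ (fderiv ℝ φ (x + t • v) v) t := by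
    intro t
    have h1 := (phi_hasFDerivAt f hf ε (x + t • v)).comp_hasDerivAt t (hL t)
    have h2 : fderiv ℝ φ (x + t • v) = _ := (phi_hasFDerivAt f hf ε (x + t • v)).fderiv
    rw [h2]
    exact h1
  have hdψ : deriv ψ = fun t => fderiv ℝ φ (x + t • v) v := funext fun t => (hψ' t).deriv
  -- second derivative
  have hψ'' : ∀ t : ℝ, HasDerivAt (deriv ψ)
      ((∑ i, v i ^ 2) + ε * fderiv ℝ (fderiv ℝ f) (x + t • v) v v) t := by
    intro t
    rw [hdψ]
    have h1 := (phi_snd_hasFDerivAt f hf ε v (x + t • v)).comp_hasDerivAt t (hL t)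
    have : ((∑ i, v i • ContinuousLinearMap.proj (R := ℝ) (φ := fun _ : Fin n => ℝ) i)
        + ε • (fderiv ℝ (fderiv ℝ f) (x + t • v)).flip v) v
        = (∑ i, v i ^ 2) + ε * fderiv ℝ (fderiv ℝ f) (x + t • v) v v := by
      simp [ContinuousLinearMap.sum_apply, sq]
    rw [this] at h1
    exact h1
  -- positivity of the second derivative
  have hSS : 0 < ∑ i, v i ^ 2 := by
    obtain ⟨i, hi⟩ := Function.ne_iff.mp hv0
    exact Finset.sum_pos' (fun k _ => sq_nonneg _)
      ⟨i, Finset.mem_univ i, by nlinarith [abs_pos.mpr (show v i ≠ 0 by simpa using hi), sq_abs (v i)]⟩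
  have hnv : ‖v‖ ^ 2 ≤ ∑ i, v i ^ 2 := by
    have h1 : ‖v‖ ≤ Real.sqrt (∑ i, v i ^ 2) := by
      apply pi_norm_le_iff_of_nonneg (Real.sqrt_nonneg _) |>.mpr
      intro i
      rw [Real.norm_eq_abs, ← Real.sqrt_sq_eq_abs]
      exact Real.sqrt_le_sqrt (Finset.single_le_sum (f := fun k => v k ^ 2)
        (fun k _ => sq_nonneg _) (Finset.mem_univ i))
    calc ‖v‖ ^ 2 ≤ Real.sqrt (∑ i, v i ^ 2) ^ 2 := by
          apply pow_le_pow_left₀ (norm_nonneg _) h1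
      _ = ∑ i, v i ^ 2 := Real.sq_sqrt hSS.le
  have hM0 : 0 ≤ M := le_trans (norm_nonneg _) (hM 0)
  have hpos : ∀ t : ℝ, 0 < deriv^[2] ψ t := by
    intro t
    have : deriv^[2] ψ t = (∑ i, v i ^ 2) + ε * fderiv ℝ (fderiv ℝ f) (x + t • v) v v := by
      show deriv (deriv ψ) t = _
      exact (hψ'' t).deriv
    rw [this]
    have hB := snd_bound f hM (x + t • v) v v
    have hb2 : |ε * fderiv ℝ (fderiv ℝ f) (x + t • v) v v| ≤ ε * M * (∑ i, v i ^ 2) := by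
      rw [abs_mul, abs_of_pos hε]
      calc ε * |fderiv ℝ (fderiv ℝ f) (x + t • v) v v| ≤ ε * (M * (‖v‖ * ‖v‖)) := by
            exact mul_le_mul_of_nonneg_left hB hε.le
        _ = ε * M * ‖v‖ ^ 2 := by ring
        _ ≤ ε * M * (∑ i, v i ^ 2) := by
            apply mul_le_mul_of_nonneg_left hnv (by positivity)
    have := neg_abs_le (ε * fderiv ℝ (fderiv ℝ f) (x + t • v) v v)
    nlinarith [hSS, hεM, hb2]
  -- strict convexity of ψ
  have hψc : Continuous ψ := by
    have hφc : Continuous φ := by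
      apply Continuous.add
      · exact (continuous_finset_sum _ fun i _ => (continuous_apply i).pow 2).div_const 2
      · exact continuous_const.mul (hf.continuous)
    exact hφc.comp (continuous_const.add (continuous_id.smul continuous_const))
  have hsc : StrictConvexOn ℝ Set.univ ψ :=
    strictConvexOn_univ_of_deriv2_pos hψc hpos
  have key := hsc.2 (Set.mem_univ (0 : ℝ)) (Set.mem_univ (1 : ℝ)) (by norm_num) ha hb hab
  have e0 : ψ 0 = φ x := by simp [hψ]
  have e1 : ψ 1 = φ y := by simp [hψ, hv]
  have e2 : a • (0 : ℝ) + b • (1 : ℝ) = b := by simp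
  rw [e0, e1, e2] at key
  have harg : x + b • v = a • x + b • y := by
    have hab' : a = 1 - b := by linarith
    rw [hv, hab']
    module
  have e3 : ψ b = φ (a • x + b • y) := by
    show φ (x + b • v) = φ (a • x + b • y)
    rw [harg]
  rw [e3] at key
  exact key

private lemma spectrum_shift {ε : ℝ} (hε : ε ≠ 0) (A : Matrix (Fin n) (Fin n) ℝ) :
    spectrum ℝ ((1 : Matrix (Fin n) (Fin n) ℝ) + ε • A)
      = (fun d => 1 + ε * d) '' spectrum ℝ A := by
  have h1 : (1 : Matrix (Fin n) (Fin n) ℝ) = algebraMap ℝ (Matrix (Fin n) (Fin n) ℝ) 1 :=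
    (_root_.map_one (algebraMap ℝ (Matrix (Fin n) (Fin n) ℝ))).symm
  rw [h1, ← spectrum.singleton_add_eq]
  have h2 : spectrum ℝ (ε • A) = (ε • spectrum ℝ A : Set ℝ) := by
    have := spectrum.unit_smul_eq_smul (R := ℝ) (A := Matrix (Fin n) (Fin n) ℝ) A
      (Units.mk0 ε hε)
    simpa [Units.smul_def] using this
  rw [h2]
  ext z
  simp only [Set.mem_add, Set.mem_singleton_iff, Set.mem_smul_set, Set.mem_image]
  constructor
  · rintro ⟨u, rfl, w, ⟨d, hd, rfl⟩, rfl⟩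
    exact ⟨d, hd, rfl⟩
  · rintro ⟨d, hd, rfl⟩
    exact ⟨1, rfl, ε * d, ⟨d, hd, rfl⟩, rfl⟩

attribute [local instance] Matrix.linftyOpNormedRing Matrix.linftyOpNormedAlgebra

private lemma entry_abs_le_norm (A : Matrix (Fin n) (Fin n) ℝ) (i j : Fin n) :
    |A i j| ≤ ‖A‖ := by
  have h : ‖A i j‖₊ ≤ ‖A‖₊ := by
    rw [Matrix.linfty_opNNNorm_def]
    exact le_trans (Finset.single_le_sum (f := fun k => ‖A i k‖₊)
      (fun _ _ => zero_le) (Finset.mem_univ j))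
      (Finset.le_sup (f := fun i => ∑ j, ‖A i j‖₊) (Finset.mem_univ i))
  calc |A i j| = ‖A i j‖ := (Real.norm_eq_abs _).symm
    _ ≤ ‖A‖ := h

private lemma norm_le_of_entries {A : Matrix (Fin n) (Fin n) ℝ} {r : ℝ} (hr : 0 ≤ r)
    (h : ∀ i j, |A i j| ≤ r) : ‖A‖ ≤ n * r := by
  rw [Matrix.linfty_opNorm_def]
  have key : (Finset.univ.sup fun i : Fin n => ∑ j, ‖A i j‖₊ : NNReal)
      ≤ ⟨n * r, by positivity⟩ := by
    refine Finset.sup_le fun i _ => ?_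
    apply NNReal.coe_le_coe.mp
    push_cast
    calc ∑ j, (‖A i j‖₊ : ℝ) ≤ ∑ _j : Fin n, r := by
          refine Finset.sum_le_sum fun j _ => ?_
          rw [coe_nnnorm, Real.norm_eq_abs]; exact h i j
      _ = n * r := by simp [mul_comm]
  exact_mod_cast key

private lemma trace_abs_le (A : Matrix (Fin n) (Fin n) ℝ) : |A.trace| ≤ n * ‖A‖ := by
  calc |A.trace| = |∑ i, A i i| := by rw [Matrix.trace]; rfl
    _ ≤ ∑ i, |A i i| := Finset.abs_sum_le_sum_abs _ _
    _ ≤ ∑ _i : Fin n, ‖A‖ := Finset.sum_le_sum fun i _ => entry_abs_le_norm A i i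
    _ = n * ‖A‖ := by simp [mul_comm]

private lemma norm_one_le_one : ‖(1 : Matrix (Fin n) (Fin n) ℝ)‖ ≤ 1 := by
  rw [← Matrix.diagonal_one, Matrix.linfty_opNorm_diagonal]
  refine (pi_norm_le_iff_of_nonneg zero_le_one).mpr fun i => ?_
  simp

private lemma key_estimate (f : (Fin n → ℝ) → ℝ) (hf : ContDiff ℝ 3 f) {M : ℝ}
    (hM : ∀ x, ‖iteratedFDeriv ℝ 2 f x‖ ≤ M) {ε : ℝ} (hε : 0 < ε)
    (hsmall : ε * (n * M) ≤ 1 / 2) (x : Fin n → ℝ) :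
    |((hessMat (fun y => (∑ i, y i ^ 2) / 2 + ε * f y) x).trace
        + ((hessMat (fun y => (∑ i, y i ^ 2) / 2 + ε * f y) x)⁻¹).trace
        - 2 * n) / ε ^ 2
      - ∑ i, ∑ j, hessMat f x i j ^ 2| ≤ 2 * n * (n * M) ^ 3 * ε := by
  haveI : CompleteSpace (Matrix (Fin n) (Fin n) ℝ) := FiniteDimensional.complete ℝ _
  have hM0 : 0 ≤ M := le_trans (norm_nonneg _) (hM 0)
  set H : Matrix (Fin n) (Fin n) ℝ := hessMat f x with hH
  set C : Matrix (Fin n) (Fin n) ℝ := ε • H with hC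
  have hHn : ‖H‖ ≤ n * M :=
    norm_le_of_entries hM0 (fun i j => hess_entry_bound f hf hM x i j)
  have hCn : ‖C‖ ≤ ε * (n * M) := by
    rw [hC, norm_smul, Real.norm_eq_abs, abs_of_pos hε]
    exact mul_le_mul_of_nonneg_left hHn hε.le
  have hC12 : ‖C‖ ≤ 1 / 2 := hCn.trans hsmall
  have hnegC : ‖-C‖ < 1 := by rw [norm_neg]; linarith
  set u : (Matrix (Fin n) (Fin n) ℝ)ˣ := Units.oneSub (-C) hnegC with hu
  have hval : (u : Matrix (Fin n) (Fin n) ℝ) = 1 + C := by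
    rw [hu, Units.val_oneSub, sub_neg_eq_add]
  have hUnit : IsUnit ((1 : Matrix (Fin n) (Fin n) ℝ) + C) := ⟨u, hval⟩
  have hdet : IsUnit ((1 + C : Matrix (Fin n) (Fin n) ℝ).det) :=
    (Matrix.isUnit_iff_isUnit_det _).mp hUnit
  have hinvmul : (1 + C : Matrix (Fin n) (Fin n) ℝ)⁻¹ * (1 + C) = 1 :=
    Matrix.nonsing_inv_mul _ hdet
  -- norm bound on the inverse
  have hNinv : ‖(1 + C : Matrix (Fin n) (Fin n) ℝ)⁻¹‖ ≤ 2 := by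
    have e1 : (1 + C : Matrix (Fin n) (Fin n) ℝ)⁻¹ * (1 + C)
        = (1 + C)⁻¹ + (1 + C)⁻¹ * C := by noncomm_ring
    have e2 : (1 + C : Matrix (Fin n) (Fin n) ℝ)⁻¹ = 1 - (1 + C)⁻¹ * C :=
      eq_sub_of_add_eq (by rw [← e1, hinvmul])
    have e3 : ‖(1 + C : Matrix (Fin n) (Fin n) ℝ)⁻¹‖
        ≤ 1 + ‖(1 + C : Matrix (Fin n) (Fin n) ℝ)⁻¹‖ * ‖C‖ := by
      calc ‖(1 + C : Matrix (Fin n) (Fin n) ℝ)⁻¹‖ = ‖(1 : Matrix (Fin n) (Fin n) ℝ)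
            - (1 + C)⁻¹ * C‖ := by rw [← e2]
        _ ≤ ‖(1 : Matrix (Fin n) (Fin n) ℝ)‖ + ‖(1 + C : Matrix (Fin n) (Fin n) ℝ)⁻¹ * C‖ :=
            norm_sub_le _ _
        _ ≤ 1 + ‖(1 + C : Matrix (Fin n) (Fin n) ℝ)⁻¹‖ * ‖C‖ :=
            add_le_add norm_one_le_one (Matrix.linfty_opNorm_mul _ _)
    nlinarith [norm_nonneg ((1 + C : Matrix (Fin n) (Fin n) ℝ)⁻¹)]
  -- expansion of the inverse
  have h1 : (1 + C : Matrix (Fin n) (Fin n) ℝ) * (1 - C + C ^ 2) = 1 + C ^ 3 := by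
    noncomm_ring
  have h2 : (1 - C + C ^ 2 : Matrix (Fin n) (Fin n) ℝ)
      = (1 + C)⁻¹ + (1 + C)⁻¹ * C ^ 3 := by
    calc (1 - C + C ^ 2 : Matrix (Fin n) (Fin n) ℝ)
        = ((1 + C)⁻¹ * (1 + C)) * (1 - C + C ^ 2) := by rw [hinvmul, one_mul]
      _ = (1 + C)⁻¹ * ((1 + C) * (1 - C + C ^ 2)) := by rw [mul_assoc]
      _ = (1 + C)⁻¹ * (1 + C ^ 3) := by rw [h1]
      _ = (1 + C)⁻¹ + (1 + C)⁻¹ * C ^ 3 := by rw [mul_add, mul_one]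
  have hexp : (1 + C : Matrix (Fin n) (Fin n) ℝ)⁻¹
      = (1 - C + C ^ 2) - (1 + C)⁻¹ * C ^ 3 := eq_sub_of_add_eq h2.symm
  -- traces
  have htr1 : (1 : Matrix (Fin n) (Fin n) ℝ).trace = (n : ℝ) := by
    rw [Matrix.trace_one]; simp
  have htrC : (C : Matrix (Fin n) (Fin n) ℝ).trace = ε * H.trace := by
    rw [hC, Matrix.trace_smul, smul_eq_mul]
  have htrC2 : (C ^ 2 : Matrix (Fin n) (Fin n) ℝ).trace = ε ^ 2 * (H ^ 2).trace := by
    rw [hC, smul_pow, Matrix.trace_smul, smul_eq_mul]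
  have hHA : hessMat (fun y => (∑ i, y i ^ 2) / 2 + ε * f y) x = 1 + C :=
    hess_phi f hf ε x
  have htrH2 : (H ^ 2 : Matrix (Fin n) (Fin n) ℝ).trace = ∑ i, ∑ j, H i j ^ 2 := by
    rw [pow_two, Matrix.trace]
    refine Finset.sum_congr rfl fun i _ => ?_
    rw [Matrix.diag_apply, Matrix.mul_apply]
    refine Finset.sum_congr rfl fun j _ => ?_
    rw [hH, hess_symm f hf x j i, sq]
  -- putting it together
  have hform : ((hessMat (fun y => (∑ i, y i ^ 2) / 2 + ε * f y) x).trace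
        + ((hessMat (fun y => (∑ i, y i ^ 2) / 2 + ε * f y) x)⁻¹).trace - 2 * n)
      = ε ^ 2 * (∑ i, ∑ j, H i j ^ 2) - ((1 + C)⁻¹ * C ^ 3).trace := by
    have htrinv : ((1 + C : Matrix (Fin n) (Fin n) ℝ)⁻¹).trace
        = ((n : ℝ) - ε * H.trace + ε ^ 2 * (∑ i, ∑ j, H i j ^ 2))
          - ((1 + C)⁻¹ * C ^ 3).trace := by
      conv_lhs => rw [hexp]
      rw [Matrix.trace_sub, Matrix.trace_add, Matrix.trace_sub, htr1, htrC, htrC2, htrH2]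
    rw [hHA, Matrix.trace_add, htr1, htrC, htrinv]
    ring
  rw [hform]
  have hε2 : (0 : ℝ) < ε ^ 2 := by positivity
  have hdiv : (ε ^ 2 * (∑ i, ∑ j, H i j ^ 2) - ((1 + C)⁻¹ * C ^ 3).trace) / ε ^ 2
      - ∑ i, ∑ j, H i j ^ 2 = -(((1 + C)⁻¹ * C ^ 3).trace / ε ^ 2) := by
    field_simp
    ring
  rw [hdiv, abs_neg, abs_div, abs_of_pos hε2, div_le_iff₀ hε2]
  -- final norm bound
  have hC3 : ‖(C ^ 3 : Matrix (Fin n) (Fin n) ℝ)‖ ≤ ‖C‖ ^ 3 := by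
    have e : (C ^ 3 : Matrix (Fin n) (Fin n) ℝ) = C * C * C := by
      rw [pow_succ, pow_two]
    rw [e]
    calc ‖C * C * C‖ ≤ ‖C * C‖ * ‖C‖ := Matrix.linfty_opNorm_mul _ _
      _ ≤ (‖C‖ * ‖C‖) * ‖C‖ :=
          mul_le_mul_of_nonneg_right (Matrix.linfty_opNorm_mul _ _) (norm_nonneg _)
      _ = ‖C‖ ^ 3 := by ring
  have hbd : |(((1 + C : Matrix (Fin n) (Fin n) ℝ))⁻¹ * C ^ 3).trace|
      ≤ n * (2 * (ε * (n * M)) ^ 3) := by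
    calc |(((1 + C : Matrix (Fin n) (Fin n) ℝ))⁻¹ * C ^ 3).trace|
        ≤ n * ‖((1 + C : Matrix (Fin n) (Fin n) ℝ))⁻¹ * C ^ 3‖ := trace_abs_le _
      _ ≤ n * (‖((1 + C : Matrix (Fin n) (Fin n) ℝ))⁻¹‖ * ‖(C ^ 3 : Matrix (Fin n) (Fin n) ℝ)‖) :=
          mul_le_mul_of_nonneg_left (Matrix.linfty_opNorm_mul _ _) (Nat.cast_nonneg n)
      _ ≤ n * (2 * (ε * (n * M)) ^ 3) := by
          refine mul_le_mul_of_nonneg_left ?_ (Nat.cast_nonneg n)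
          have h3 : ‖(C ^ 3 : Matrix (Fin n) (Fin n) ℝ)‖ ≤ (ε * (n * M)) ^ 3 :=
            hC3.trans (pow_le_pow_left₀ (norm_nonneg _) hCn 3)
          exact mul_le_mul hNinv h3 (norm_nonneg _) (by norm_num)
  calc |(((1 + C : Matrix (Fin n) (Fin n) ℝ))⁻¹ * C ^ 3).trace|
      ≤ n * (2 * (ε * (n * M)) ^ 3) := hbd
    _ = 2 * n * (n * M) ^ 3 * ε * ε ^ 2 := by ring


/-- Second-order expansion underlying "WJ ⇒ Poincaré": for `f` of class `C³`
with bounded second and third derivatives and `φ_ε(x) = |x|²/2 + εf(x)`, for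
small `ε > 0` the function `φ_ε` is strictly convex, the eigenvalues of its
Hessian are `1 + ε·fᵢ` where `fᵢ` are the eigenvalues of `∇²f(x)`, and
`Δφ_ε(x) + Δφ_ε*(∇φ_ε(x)) − 2n = ε² ‖∇²f(x)‖²_HS + o(ε²)` uniformly on
compacts (here `Δφ_ε*(∇φ_ε(x))` is the trace of the inverse Hessian). -/
theorem stmt_15 {n : ℕ} (f : (Fin n → ℝ) → ℝ) (hf : ContDiff ℝ 3 f)
    (hbd2 : ∃ M, ∀ x, ‖iteratedFDeriv ℝ 2 f x‖ ≤ M)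
    (hbd3 : ∃ M, ∀ x, ‖iteratedFDeriv ℝ 3 f x‖ ≤ M) :
    (∃ ε₀ > (0 : ℝ), ∀ ε ∈ Set.Ioo (0 : ℝ) ε₀,
      StrictConvexOn ℝ Set.univ (fun x => (∑ i, x i ^ 2) / 2 + ε * f x) ∧
      ∀ x, spectrum ℝ (hessMat (fun y => (∑ i, y i ^ 2) / 2 + ε * f y) x)
        = (fun d => 1 + ε * d) '' spectrum ℝ (hessMat f x)) ∧
    (∀ s : Set (Fin n → ℝ), IsCompact s →
      TendstoUniformlyOn
        (fun (ε : ℝ) (x : Fin n → ℝ) =>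
          ((hessMat (fun y => (∑ i, y i ^ 2) / 2 + ε * f y) x).trace
            + ((hessMat (fun y => (∑ i, y i ^ 2) / 2 + ε * f y) x)⁻¹).trace
            - 2 * n) / ε ^ 2)
        (fun x => ∑ i, ∑ j, (hessMat f x i j) ^ 2)
        (nhdsWithin 0 (Set.Ioi 0)) s) := by
  obtain ⟨M, hM⟩ := hbd2
  have hM0 : (0 : ℝ) ≤ M := le_trans (norm_nonneg _) (hM 0)
  constructor
  · refine ⟨1 / (M + 1), by positivity, fun ε hε => ?_⟩
    have hεpos : 0 < ε := hε.1
    have hεM : ε * M < 1 := by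
      have h2 : ε < 1 / (M + 1) := hε.2
      have h3 : ε * (M + 1) < 1 := by
        rw [← lt_div_iff₀ (by positivity : (0:ℝ) < M + 1)]
        exact h2
      nlinarith
    refine ⟨phi_strictConvex f hf hM hεpos hεM, fun x => ?_⟩
    rw [hess_phi f hf ε x, spectrum_shift (ne_of_gt hεpos)]
  · intro s _
    rw [Metric.tendstoUniformlyOn_iff]
    intro η hη
    set B : ℝ := 2 * n * (n * M) ^ 3 with hB
    have hB0 : 0 ≤ B := by positivity
    set δ : ℝ := min (1 / (2 * (n * M + 1))) (η / (B + 1)) with hδ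
    have hδ0 : 0 < δ := by
      apply lt_min
      · positivity
      · positivity
    have hIoo : Set.Ioo (0 : ℝ) δ ∈ nhdsWithin (0 : ℝ) (Set.Ioi 0) :=
      Ioo_mem_nhdsGT_of_mem ⟨le_refl 0, hδ0⟩
    filter_upwards [hIoo] with ε hεI x _
    have hε : 0 < ε := hεI.1
    have hsmall : ε * (n * M) ≤ 1 / 2 := by
      have h1 : ε < 1 / (2 * (n * M + 1)) := lt_of_lt_of_le hεI.2 (min_le_left _ _)
      have h2 : (0:ℝ) ≤ (n : ℝ) * M := by positivity
      have h3 : ε * (2 * ((n:ℝ) * M + 1)) < 1 := (lt_div_iff₀ (by positivity)).mp h1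
      nlinarith [mul_nonneg hε.le h2]
    have key := key_estimate f hf hM hε hsmall x
    rw [Real.dist_eq]
    have hflip : |∑ i, ∑ j, hessMat f x i j ^ 2
        - ((hessMat (fun y => (∑ i, y i ^ 2) / 2 + ε * f y) x).trace
          + ((hessMat (fun y => (∑ i, y i ^ 2) / 2 + ε * f y) x)⁻¹).trace
          - 2 * n) / ε ^ 2| ≤ B * ε := by
      rw [abs_sub_comm]
      exact key
    have hεδ : ε < η / (B + 1) := lt_of_lt_of_le hεI.2 (min_le_right _ _)
    have : B * ε < η := by
      have h3 : (B + 1) * ε < η := by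
        rw [← lt_div_iff₀' (by positivity : (0:ℝ) < B + 1)] at *
        linarith
      nlinarith
    linarith [hflip]
end
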